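/- (Claim 3.6.) Fix a realization (A, R_A) in the support of the process and an index i ∈ {1, …, m}. Conditioned on (A, R_A), the expected number of pairs (x, r) ∈ P_i(F(A, R_A)) that do not remain feasible after the random choice of B is at most m + 1. Moreover, the same bound m + 1 holds when one additionally conditions on the event that i ∈ P_B and b_i = β, for any fixed β ∈ U_i \ {a_i}. -/

import Mathlib

noncomputable section

namespace Retrieval

/-! ### Entropy on a finite sample space with the uniform distribution -/

/-- The probability of an event `s` under the uniform distribution on a finite type `Ω`. -/
def unifPr (Ω : Type*) [Fintype Ω] (s : Set Ω) : ℝ :=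
  (Nat.card s : ℝ) / (Fintype.card Ω : ℝ)

/-- The Shannon entropy (in bits) of a random variable `X` defined on a finite sample
space `Ω` carrying the uniform distribution. -/
def entropy {Ω : Type*} {α : Type*} [Fintype Ω] (X : Ω → α) : ℝ :=
  (∑ ω : Ω, -Real.logb 2 (unifPr Ω {ω' | X ω' = X ω})) / (Fintype.card Ω : ℝ)

/-- The conditional Shannon entropy `H(X | Y) = H(X, Y) − H(Y)` (in bits). -/
def condEntropy {Ω : Type*} {α β : Type*} [Fintype Ω] (X : Ω → α) (Y : Ω → β) : ℝ :=
  entropy (fun ω => (X ω, Y ω)) - entropy Y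

/-- The first bit of a `v`-bit string. -/
def firstBit {v : ℕ} (r : Fin v → Bool) : Bool :=
  if h : 0 < v then r ⟨0, h⟩ else false

/-! ### The incremental random process

Parameters `n v u`.  The universe `[u]` is split into `m = n − n/v` consecutive parts,
each of size `u/m`.  An element of the `i`-th part is identified by its position
`a ∈ Fin (u/m)` inside the part; as a natural number it is the key `i·(u/m) + a`. -/

variable (n v u : ℕ)

/-- `m = n − n/v`, the number of parts of the universe. -/
def M : ℕ := n - n / v

/-- `u/m`, the size of each part of the universe. -/
def W : ℕ := u / M n v

/-- The key (element of `[u]`, 0-indexed) at position `a` of part `i`. -/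
def key (i : Fin (M n v)) (a : Fin (W n v u)) : ℕ := (i : ℕ) * W n v u + (a : ℕ)

/-- The model hypotheses on the parameters: `2 ≤ v ≤ log₂ n`, `v ∣ n`,
`m = n − n/v` divides `u`, and `u ≥ n³`. -/
def Hyp : Prop :=
  2 ≤ v ∧ (v : ℝ) ≤ Real.logb 2 n ∧ v ∣ n ∧ M n v ∣ u ∧ n ^ 3 ≤ u

/-- Raw data of a realization of the incremental random process:
`((A, R_A), (P_B, B, R_B))`.  `A i` is the (position of the) element of `A` in part `i`
and `R_A i` its `v`-bit value; `P_B` is the set of parts from which `B` samples, `B i` the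
element of `B` in part `i` (for `i ∈ P_B`; it is a canonical junk value `0` otherwise) and
`R_B i` its value (a canonical junk value otherwise). -/
abbrev IncData : Type :=
  ((Fin (M n v) → Fin (W n v u)) × (Fin (M n v) → Fin v → Bool)) ×
    (Finset (Fin (M n v)) × (Fin (M n v) → Fin (W n v u)) × (Fin (M n v) → Fin v → Bool))

/-- Validity of a realization of `(A, R_A)`: every value has first bit `0`
(the set `A` itself is unconstrained). -/
def ValidAR (_A : Fin (M n v) → Fin (W n v u)) (RA : Fin (M n v) → Fin v → Bool) : Prop :=
  ∀ j, firstBit (RA j) = false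

/-- Validity of a realization `(P_B, B)` given `A`: `|P_B| = n/v`, for `i ∈ P_B` the
element `B i` avoids `A i`, and outside `P_B` the function `B` takes a canonical junk
value (so that `(P_B, B)` carries exactly the information of the indexed family
`(b_i)_{i ∈ P_B}`). -/
def ValidB (A : Fin (M n v) → Fin (W n v u)) (P : Finset (Fin (M n v)))
    (B : Fin (M n v) → Fin (W n v u)) : Prop :=
  P.card = n / v ∧ (∀ j ∈ P, B j ≠ A j) ∧ ∀ j ∉ P, (B j : ℕ) = 0

/-- Validity of a realization of `R_B` given `P_B`: for `i ∈ P_B` the value has first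
bit `1`; outside `P_B` it is a canonical junk value. -/
def ValidRB (P : Finset (Fin (M n v))) (RB : Fin (M n v) → Fin v → Bool) : Prop :=
  (∀ j ∈ P, firstBit (RB j) = true) ∧ ∀ j ∉ P, RB j = fun _ => false

/-- Validity of a full realization of the incremental process. -/
def IncValid (d : IncData n v u) : Prop :=
  ValidAR n v u d.1.1 d.1.2 ∧ ValidB n v u d.1.1 d.2.1 d.2.2.1 ∧ ValidRB n v d.2.1 d.2.2.2

/-- The sample space of the incremental random process: since every random choice in the
process is uniform (subject to the stated constraints, whose number of options does not
depend on the previous choices), the joint distribution of `(A, R_A, P_B, B, R_B)` is the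
uniform distribution on the set of valid realizations. -/
abbrev IncOmega : Type := {d : IncData n v u // IncValid n v u d}

noncomputable instance : Fintype (IncOmega n v u) := Fintype.ofFinite _

/-- The type of the (deterministic) map `F`, building a bit string from a realization of
`(A, R_A)`. -/
abbrev FBuilder : Type :=
  (Fin (M n v) → Fin (W n v u)) → (Fin (M n v) → Fin v → Bool) → List Bool

/-- The type of the (deterministic) map `G`, building a bit string from a bit string
together with a realization of `(B, R_B)` (given as `(P_B, B, R_B)`). -/
abbrev GBuilder : Type :=
  List Bool → Finset (Fin (M n v)) → (Fin (M n v) → Fin (W n v u)) →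
    (Fin (M n v) → Fin v → Bool) → List Bool

/-- The type of the (deterministic) query map: a bit string and a key give a `v`-bit
value. -/
abbrev QueryFn (v : ℕ) : Type := List Bool → ℕ → Fin v → Bool

/-- The random bit string `F = F(A, R_A)`. -/
def Frv (F : FBuilder n v u) (ω : IncOmega n v u) : List Bool := F ω.1.1.1 ω.1.1.2

/-- The random bit string `G = G(F(A, R_A), B, R_B)`. -/
def Grv (F : FBuilder n v u) (G : GBuilder n v u) (ω : IncOmega n v u) : List Bool :=
  G (Frv n v u F ω) ω.1.2.1 ω.1.2.2.1 ω.1.2.2.2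

/-- The random variable `B` (together with the set of parts `P_B` it samples from). -/
def Brv (ω : IncOmega n v u) : Finset (Fin (M n v)) × (Fin (M n v) → Fin (W n v u)) :=
  (ω.1.2.1, ω.1.2.2.1)

/-- The random variable `(B, R_B)`. -/
def BRrv (ω : IncOmega n v u) :
    Finset (Fin (M n v)) × (Fin (M n v) → Fin (W n v u)) × (Fin (M n v) → Fin v → Bool) :=
  ω.1.2

/-- Correctness of an incremental retrieval scheme `(F, G, Query)`: on every realization
in the support of the process, querying `F(A,R_A)` with a key of `A` returns its value,
and querying `G(F(A,R_A),B,R_B)` with a key of `A` or of `B` returns its value. -/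
def Correct (F : FBuilder n v u) (G : GBuilder n v u) (Q : QueryFn v) : Prop :=
  ∀ ω : IncOmega n v u,
    (∀ i, Q (Frv n v u F ω) (key n v u i (ω.1.1.1 i)) = ω.1.1.2 i) ∧
    (∀ i, Q (Grv n v u F G ω) (key n v u i (ω.1.1.1 i)) = ω.1.1.2 i) ∧
    (∀ i ∈ ω.1.2.1, Q (Grv n v u F G ω) (key n v u i (ω.1.2.2.1 i)) = ω.1.2.2.2 i)

/-- The plausible set `P_i(f)`: all pairs `(x, r)` of an element `x` of part `i` and a
`v`-bit value `r` with first bit `0` such that some realization `(A', R'_{A'})` in the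
support of `(A, R_A)` has `F(A', R'_{A'}) = f`, `x` the element of `A'` in part `i`, and
`r` its value. -/
def Plausible (F : FBuilder n v u) (f : List Bool) (i : Fin (M n v)) :
    Set (Fin (W n v u) × (Fin v → Bool)) :=
  {p | ∃ A' RA', ValidAR n v u A' RA' ∧ F A' RA' = f ∧ A' i = p.1 ∧ RA' i = p.2}

/-- A pair `(x, r) ∈ P_i(f)` *remains feasible after `B`* (given as `(P_B, B)`) if the
witness `(A', R'_{A'})` can additionally be chosen with `A' ∩ B = ∅`. -/
def Feasible (F : FBuilder n v u) (f : List Bool) (i : Fin (M n v))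
    (P : Finset (Fin (M n v))) (B : Fin (M n v) → Fin (W n v u))
    (p : Fin (W n v u) × (Fin v → Bool)) : Prop :=
  ∃ A' RA', ValidAR n v u A' RA' ∧ F A' RA' = f ∧ A' i = p.1 ∧ RA' i = p.2 ∧
    ∀ j ∈ P, B j ≠ A' j

end Retrieval

namespace Retrieval

/-! ### Auxiliary counting lemmas -/

lemma count_le {m' W' : ℕ} (A : Fin m' → Fin W')
    (S : Finset (Finset (Fin m') × (Fin m' → Fin W'))) (j : Fin m')
    (hS : ∀ q ∈ S, j ∈ q.1 → q.2 j ≠ A j)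
    (hclosed : ∀ q ∈ S, j ∈ q.1 → ∀ y : Fin W', y ≠ A j →
      (q.1, Function.update q.2 j y) ∈ S)
    (c : Fin W') :
    (W' - 1) * (S.filter (fun q => j ∈ q.1 ∧ q.2 j = c)).card
      ≤ (S.filter (fun q => j ∈ q.1)).card := by
  classical
  by_cases hc : c = A j
  · have he : S.filter (fun q => j ∈ q.1 ∧ q.2 j = c) = ∅ := by
      rw [Finset.filter_eq_empty_iff]
      rintro q hq ⟨h1, h2⟩
      exact hS q hq h1 (by rw [h2, hc])
    simp [he]
  · have key : ∀ c' : Fin W', c' ≠ A j →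
        (S.filter (fun q => j ∈ q.1 ∧ q.2 j = c')).card
          = (S.filter (fun q => j ∈ q.1 ∧ q.2 j = c)).card := by
      intro c' hc'
      apply Finset.card_bij' (fun q _ => (q.1, Function.update q.2 j c))
        (fun q _ => (q.1, Function.update q.2 j c'))
      case hi =>
        rintro q hq
        rw [Finset.mem_filter] at hq ⊢
        exact ⟨hclosed q hq.1 hq.2.1 c hc, hq.2.1, by simp⟩
      case hj =>
        rintro q hq
        rw [Finset.mem_filter] at hq ⊢
        exact ⟨hclosed q hq.1 hq.2.1 c' hc', hq.2.1, by simp⟩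
      case left_inv =>
        rintro q hq
        rw [Finset.mem_filter] at hq
        have h2 : Function.update (Function.update q.2 j c) j c' = q.2 := by
          rw [Function.update_idem, ← hq.2.2, Function.update_eq_self]
        simp [h2]
      case right_inv =>
        rintro q hq
        rw [Finset.mem_filter] at hq
        have h2 : Function.update (Function.update q.2 j c') j c = q.2 := by
          rw [Function.update_idem, ← hq.2.2, Function.update_eq_self]
        simp [h2]
    have h1 : ∑ c' ∈ Finset.univ.erase (A j),
        (S.filter (fun q => j ∈ q.1 ∧ q.2 j = c')).card
          = (W' - 1) * (S.filter (fun q => j ∈ q.1 ∧ q.2 j = c)).card := by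
      rw [Finset.sum_congr rfl (fun c' hc' => key c' (Finset.ne_of_mem_erase hc'))]
      rw [Finset.sum_const, Finset.card_erase_of_mem (Finset.mem_univ _),
        Finset.card_univ, Fintype.card_fin, smul_eq_mul]
    calc (W' - 1) * (S.filter (fun q => j ∈ q.1 ∧ q.2 j = c)).card
        = ∑ c' ∈ Finset.univ.erase (A j),
            (S.filter (fun q => j ∈ q.1 ∧ q.2 j = c')).card := h1.symm
      _ ≤ ∑ c' : Fin W', (S.filter (fun q => j ∈ q.1 ∧ q.2 j = c')).card :=
          Finset.sum_le_sum_of_subset (Finset.erase_subset _ _)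
      _ = (S.filter (fun q => j ∈ q.1)).card := by
          rw [Finset.card_eq_sum_card_fiberwise
            (f := fun q => q.2 j) (t := Finset.univ) (fun x _ => Finset.mem_univ _)]
          exact Finset.sum_congr rfl fun c' _ => by rw [Finset.filter_filter]

lemma sum_bound {m' W' : ℕ} (A : Fin m' → Fin W')
    (S : Finset (Finset (Fin m') × (Fin m' → Fin W'))) (Js : Finset (Fin m')) (K : ℕ)
    {PT : Type*} (PF : Finset PT) (wfn : PT → Fin m' → Fin W')
    (hS : ∀ q ∈ S, ∀ j ∈ q.1, q.2 j ≠ A j)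
    (hclosed : ∀ q ∈ S, ∀ j ∈ Js, j ∈ q.1 → ∀ y : Fin W', y ≠ A j →
      (q.1, Function.update q.2 j y) ∈ S)
    (hK : ∀ q ∈ S, (q.1 ∩ Js).card ≤ K) :
    (W' - 1) * ∑ q ∈ S, ∑ j ∈ q.1 ∩ Js, (PF.filter (fun p => q.2 j = wfn p j)).card
      ≤ PF.card * (K * S.card) := by
  classical
  have step1 : ∑ q ∈ S, ∑ j ∈ q.1 ∩ Js, (PF.filter (fun p => q.2 j = wfn p j)).card
      = ∑ j ∈ Js, ∑ p ∈ PF,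
          (S.filter (fun q => j ∈ q.1 ∧ q.2 j = wfn p j)).card := by
    have e1 : ∀ q : Finset (Fin m') × (Fin m' → Fin W'),
        ∑ j ∈ q.1 ∩ Js, (PF.filter (fun p => q.2 j = wfn p j)).card
          = ∑ j ∈ Js, ∑ p ∈ PF, if j ∈ q.1 ∧ q.2 j = wfn p j then 1 else 0 := by
      intro q
      rw [Finset.inter_comm, ← Finset.sum_ite_mem Js q.1]
      refine Finset.sum_congr rfl fun j _ => ?_
      by_cases h : j ∈ q.1
      · simp only [h, if_true, true_and, Finset.card_filter]
      · simp [h]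
    rw [Finset.sum_congr rfl fun q _ => e1 q, Finset.sum_comm]
    refine Finset.sum_congr rfl fun j _ => ?_
    rw [Finset.sum_comm]
    exact Finset.sum_congr rfl fun p _ => (Finset.card_filter _ _).symm
  rw [step1, Finset.mul_sum]
  calc ∑ j ∈ Js, (W' - 1) * ∑ p ∈ PF,
          (S.filter (fun q => j ∈ q.1 ∧ q.2 j = wfn p j)).card
      ≤ ∑ j ∈ Js, ∑ p ∈ PF, (S.filter (fun q => j ∈ q.1)).card := by
        refine Finset.sum_le_sum fun j hj => ?_
        rw [Finset.mul_sum]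
        refine Finset.sum_le_sum fun p _ => ?_
        exact count_le A S j (fun q hq hj' => hS q hq j hj')
          (fun q hq hj' => hclosed q hq j hj hj') (wfn p j)
    _ = PF.card * ∑ j ∈ Js, (S.filter (fun q => j ∈ q.1)).card := by
        rw [Finset.mul_sum]
        exact Finset.sum_congr rfl fun j _ => by
          rw [Finset.sum_const, smul_eq_mul]
    _ ≤ PF.card * (K * S.card) := by
        refine Nat.mul_le_mul_left _ ?_
        have e2 : ∑ j ∈ Js, (S.filter (fun q => j ∈ q.1)).card
            = ∑ q ∈ S, (q.1 ∩ Js).card := by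
          have e3 : ∀ j ∈ Js, (S.filter (fun q => j ∈ q.1)).card
              = ∑ q ∈ S, if j ∈ q.1 then 1 else 0 :=
            fun j _ => Finset.card_filter _ _
          rw [Finset.sum_congr rfl e3, Finset.sum_comm]
          refine Finset.sum_congr rfl fun q _ => ?_
          rw [← Finset.card_filter, Finset.filter_mem_eq_inter, Finset.inter_comm]
        rw [e2]
        calc ∑ q ∈ S, (q.1 ∩ Js).card ≤ ∑ _q ∈ S, K := Finset.sum_le_sum hK
          _ = K * S.card := by rw [Finset.sum_const, smul_eq_mul, mul_comm]


/-- **Claim 3.6.** Fix a realization `(A, R_A)` in the support of the process and an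
index `i ∈ {1, …, m}`.  Conditioned on `(A, R_A)`, the expected number of pairs
`(x, r) ∈ P_i(F(A, R_A))` that do *not* remain feasible after the random choice of `B`
is at most `m + 1`.  Moreover, the same bound `m + 1` holds when one additionally
conditions on the event that `i ∈ P_B` and `b_i = β`, for any fixed `β ∈ U_i \ {a_i}`.

(Conditioned on `(A, R_A)`, the pair `(P_B, B)` is uniform over its valid realizations,
so each conditional expectation is the corresponding average of counts.) -/
theorem expected_infeasible_pairs :
    ∀ n v u : ℕ, Hyp n v u →
    ∀ (F : FBuilder n v u) (G : GBuilder n v u) (Q : QueryFn v),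
      Correct n v u F G Q →
    ∀ (A : Fin (M n v) → Fin (W n v u)) (RA : Fin (M n v) → Fin v → Bool),
      ValidAR n v u A RA →
    ∀ i : Fin (M n v),
      ((∑ q : Finset (Fin (M n v)) × (Fin (M n v) → Fin (W n v u)),
          Set.indicator {q | ValidB n v u A q.1 q.2}
            (fun q => (Nat.card {p : Fin (W n v u) × (Fin v → Bool) |
                p ∈ Plausible n v u F (F A RA) i ∧
                  ¬ Feasible n v u F (F A RA) i q.1 q.2 p} : ℝ)) q) /
          (Nat.card {q : Finset (Fin (M n v)) × (Fin (M n v) → Fin (W n v u)) //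
            ValidB n v u A q.1 q.2} : ℝ) ≤ (M n v : ℝ) + 1) ∧
      ∀ β : Fin (W n v u), β ≠ A i →
        (∑ q : Finset (Fin (M n v)) × (Fin (M n v) → Fin (W n v u)),
            Set.indicator {q | ValidB n v u A q.1 q.2 ∧ i ∈ q.1 ∧ q.2 i = β}
              (fun q => (Nat.card {p : Fin (W n v u) × (Fin v → Bool) |
                  p ∈ Plausible n v u F (F A RA) i ∧
                    ¬ Feasible n v u F (F A RA) i q.1 q.2 p} : ℝ)) q) /
          (Nat.card {q : Finset (Fin (M n v)) × (Fin (M n v) → Fin (W n v u)) //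
            ValidB n v u A q.1 q.2 ∧ i ∈ q.1 ∧ q.2 i = β} : ℝ) ≤ (M n v : ℝ) + 1 := by
  intro n v u hyp F G Q hC A RA hAR i
  classical
  obtain ⟨h2v, hlog, hvn, hmu, hu3⟩ := hyp
  have hv0 : 0 < v := by omega
  have hn0 : 0 < n := by
    by_contra h
    have hn : n = 0 := by omega
    rw [hn] at hlog
    simp only [Nat.cast_zero, Real.logb_zero] at hlog
    have h2 : (2:ℝ) ≤ (v:ℝ) := by exact_mod_cast h2v
    linarith
  have hpow : 2 ^ v ≤ n := by
    have h2 : (0:ℝ) < (n:ℝ) := by exact_mod_cast hn0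
    have hconc := (Real.le_logb_iff_rpow_le one_lt_two h2).1 hlog
    rw [Real.rpow_natCast] at hconc
    exact_mod_cast hconc
  have hn4 : 4 ≤ n := by
    calc 4 = 2 ^ 2 := rfl
      _ ≤ 2 ^ v := Nat.pow_le_pow_right (by norm_num) h2v
      _ ≤ n := hpow
  have hvn' : v ≤ n := le_trans (Nat.lt_two_pow_self (n := v)).le hpow
  have hk1 : 1 ≤ n / v := (Nat.one_le_div_iff hv0).2 hvn'
  have hkhalf : n / v ≤ n / 2 := Nat.div_le_div_left h2v (by norm_num)
  have hhalf : n / 2 * 2 ≤ n := Nat.div_mul_le_self n 2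
  have hk2 : 2 * (n / v) ≤ n := by omega
  have hMdef : M n v = n - n / v := rfl
  have hkm : n / v ≤ M n v := by omega
  have hm2 : 2 ≤ M n v := by omega
  have hmn : M n v ≤ n := by omega
  have hm0 : 0 < M n v := by omega
  have hWlb : n * n ≤ W n v u := by
    have h1 : n ^ 3 / M n v ≤ u / M n v := Nat.div_le_div_right hu3
    have h2 : n ^ 3 / n ≤ n ^ 3 / M n v := Nat.div_le_div_left hmn hm0
    have h3 : n ^ 3 / n = n * n := by
      have h4 : n ^ 3 = n * n * n := by ring
      rw [h4, Nat.mul_div_cancel _ hn0]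
    have h5 : W n v u = u / M n v := rfl
    omega
  have hWn : 4 * n ≤ W n v u := by nlinarith
  have hWM : M n v + 2 ≤ W n v u := by omega
  have hW2 : 2 ≤ W n v u := by omega
  -- every plausible pair has its value determined by querying `F A RA`
  have hval : ∀ p : Fin (W n v u) × (Fin v → Bool),
      p ∈ Plausible n v u F (F A RA) i → p.2 = Q (F A RA) (key n v u i p.1) := by
    rintro ⟨x, r⟩ ⟨A', RA', h1, h2, h3, h4⟩
    obtain ⟨P₀, -, hP₀⟩ := Finset.exists_subset_card_eq
      (s := (Finset.univ : Finset (Fin (M n v)))) (n := n / v)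
      (by rw [Finset.card_univ, Fintype.card_fin]; exact hkm)
    have hz0 : 0 < W n v u := by omega
    have hz1 : 1 < W n v u := by omega
    set z0 : Fin (W n v u) := ⟨0, hz0⟩ with hz0def
    set z1 : Fin (W n v u) := ⟨1, hz1⟩ with hz1def
    set B₀ : Fin (M n v) → Fin (W n v u) :=
      fun j => if j ∈ P₀ then (if A' j = z0 then z1 else z0) else z0 with hB₀
    set RB₀ : Fin (M n v) → Fin v → Bool :=
      fun j => if j ∈ P₀ then (fun _ => true) else (fun _ => false) with hRB₀
    have hvalid : IncValid n v u ((A', RA'), (P₀, B₀, RB₀)) := by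
      refine ⟨h1, ⟨hP₀, ?_, ?_⟩, ?_, ?_⟩
      · intro j hj
        simp only [hB₀, if_pos hj]
        by_cases h : A' j = z0
        · rw [if_pos h, h]
          intro hcon
          have : (1 : ℕ) = 0 := congrArg Fin.val hcon
          omega
        · rw [if_neg h]
          exact fun hcon => h (hcon.symm)
      · intro j hj
        simp [hB₀, hj, hz0def]
      · intro j hj
        simp only [hRB₀, if_pos hj]
        simp [firstBit, hv0]
      · intro j hj
        simp [hRB₀, hj]
    have hq := (hC ⟨((A', RA'), (P₀, B₀, RB₀)), hvalid⟩).1 i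
    simp only [Frv] at hq
    rw [h2, h3, h4] at hq
    exact hq.symm
  -- canonical witness
  have hwitex : ∀ p : Fin (W n v u) × (Fin v → Bool),
      ∃ wp : (Fin (M n v) → Fin (W n v u)) × (Fin (M n v) → Fin v → Bool),
        p ∈ Plausible n v u F (F A RA) i →
          ValidAR n v u wp.1 wp.2 ∧ F wp.1 wp.2 = F A RA ∧ wp.1 i = p.1 ∧ wp.2 i = p.2 := by
    intro p
    by_cases hp : p ∈ Plausible n v u F (F A RA) i
    · obtain ⟨A', RA', h1, h2, h3, h4⟩ := hp
      exact ⟨(A', RA'), fun _ => ⟨h1, h2, h3, h4⟩⟩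
    · exact ⟨(A, RA), fun h => absurd h hp⟩
  choose wt hwt using hwitex
  -- the plausible set as a finset, of size at most W
  set PF : Finset (Fin (W n v u) × (Fin v → Bool)) :=
    Finset.univ.filter (· ∈ Plausible n v u F (F A RA) i) with hPFdef
  have hPFcard : PF.card ≤ W n v u := by
    have hinj : Set.InjOn Prod.fst (↑PF : Set (Fin (W n v u) × (Fin v → Bool))) := by
      rintro p hp p' hp' hpp
      have hp1 : p ∈ Plausible n v u F (F A RA) i :=
        (Finset.mem_filter.1 hp).2
      have hp1' : p' ∈ Plausible n v u F (F A RA) i :=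
        (Finset.mem_filter.1 hp').2
      exact Prod.ext hpp (by rw [hval p hp1, hval p' hp1', hpp])
    have := Finset.card_le_card_of_injOn (t := (Finset.univ : Finset (Fin (W n v u))))
      Prod.fst (fun a _ => Finset.mem_univ _) hinj
    simpa using this
  -- pointwise bound on the number of infeasible pairs
  have hNle : ∀ (P' : Finset (Fin (M n v))) (B' : Fin (M n v) → Fin (W n v u)),
      Nat.card {p : Fin (W n v u) × (Fin v → Bool) |
          p ∈ Plausible n v u F (F A RA) i ∧
            ¬ Feasible n v u F (F A RA) i P' B' p}
        ≤ ∑ j ∈ P', (PF.filter (fun p => B' j = (wt p).1 j)).card := by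
    intro P' B'
    have hsub : {p : Fin (W n v u) × (Fin v → Bool) |
        p ∈ Plausible n v u F (F A RA) i ∧
          ¬ Feasible n v u F (F A RA) i P' B' p}
        ⊆ ↑(P'.biUnion fun j => PF.filter fun p => B' j = (wt p).1 j) := by
      rintro p ⟨hp, hnf⟩
      have hw := hwt p hp
      have hex : ¬ ∀ j ∈ P', B' j ≠ (wt p).1 j := fun hcon =>
        hnf ⟨(wt p).1, (wt p).2, hw.1, hw.2.1, hw.2.2.1, hw.2.2.2, hcon⟩
      push_neg at hex
      obtain ⟨j, hj, hjeq⟩ := hex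
      simp only [Finset.coe_biUnion, Set.mem_iUnion, Finset.mem_coe]
      exact ⟨j, hj, Finset.mem_filter.2 ⟨Finset.mem_filter.2 ⟨Finset.mem_univ _, hp⟩, hjeq⟩⟩
    calc Nat.card {p : Fin (W n v u) × (Fin v → Bool) |
          p ∈ Plausible n v u F (F A RA) i ∧
            ¬ Feasible n v u F (F A RA) i P' B' p}
        = Set.ncard {p : Fin (W n v u) × (Fin v → Bool) |
          p ∈ Plausible n v u F (F A RA) i ∧
            ¬ Feasible n v u F (F A RA) i P' B' p} := Nat.card_coe_set_eq _
      _ ≤ Set.ncard ↑(P'.biUnion fun j => PF.filter fun p => B' j = (wt p).1 j) :=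
          Set.ncard_le_ncard hsub (Finset.finite_toSet _)
      _ = (P'.biUnion fun j => PF.filter fun p => B' j = (wt p).1 j).card :=
          Set.ncard_coe_finset _
      _ ≤ ∑ j ∈ P', (PF.filter fun p => B' j = (wt p).1 j).card :=
          Finset.card_biUnion_le
  -- closure of validity under coordinate updates
  have hclosedV : ∀ (P' : Finset (Fin (M n v))) (B' : Fin (M n v) → Fin (W n v u)),
      ValidB n v u A P' B' → ∀ j ∈ P', ∀ y : Fin (W n v u), y ≠ A j →
        ValidB n v u A P' (Function.update B' j y) := by
    rintro P' B' ⟨hc, hne, hjunk⟩ j hj y hy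
    refine ⟨hc, ?_, ?_⟩
    · intro j' hj'
      by_cases h : j' = j
      · subst h
        rw [Function.update_self]
        exact hy
      · rw [Function.update_of_ne h]
        exact hne j' hj'
    · intro j' hj'
      have h : j' ≠ j := fun h => hj' (h ▸ hj)
      rw [Function.update_of_ne h]
      exact hjunk j' hj'
  have ineqA : W n v u * (n / v) ≤ (M n v + 1) * (W n v u - 1) := by
    obtain ⟨W1, hW1⟩ : ∃ W1, W n v u = W1 + 1 := ⟨W n v u - 1, by omega⟩
    rw [hW1]
    simp only [Nat.add_sub_cancel]
    have h1 : n / v ≤ W1 := by omega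
    calc (W1 + 1) * (n / v) = W1 * (n / v) + (n / v) := by ring
      _ ≤ W1 * (n / v) + W1 := by omega
      _ = W1 * (n / v + 1) := by ring
      _ ≤ W1 * (M n v + 1) := Nat.mul_le_mul_left _ (by omega)
      _ = (M n v + 1) * W1 := mul_comm _ _
  have ineqB : W n v u * (n / v - 1) ≤ M n v * (W n v u - 1) := by
    obtain ⟨W1, hW1⟩ : ∃ W1, W n v u = W1 + 1 := ⟨W n v u - 1, by omega⟩
    rw [hW1]
    simp only [Nat.add_sub_cancel]
    have h1 : n / v - 1 ≤ W1 := by omega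
    calc (W1 + 1) * (n / v - 1) = W1 * (n / v - 1) + (n / v - 1) := by ring
      _ ≤ W1 * (n / v - 1) + W1 := by omega
      _ = W1 * (n / v - 1 + 1) := by ring
      _ = W1 * (n / v) := by rw [Nat.sub_add_cancel hk1]
      _ ≤ W1 * M n v := Nat.mul_le_mul_left _ hkm
      _ = M n v * W1 := mul_comm _ _
  constructor
  · -- part 1: unconditional expectation
    set V : Finset (Finset (Fin (M n v)) × (Fin (M n v) → Fin (W n v u))) :=
      Finset.univ.filter (fun q => ValidB n v u A q.1 q.2) with hVdef
    have hcard1 : Nat.card {q : Finset (Fin (M n v)) × (Fin (M n v) → Fin (W n v u)) //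
        ValidB n v u A q.1 q.2} = V.card := by
      rw [Nat.card_eq_fintype_card, Fintype.card_subtype]
    have hsum1 : (∑ q : Finset (Fin (M n v)) × (Fin (M n v) → Fin (W n v u)),
        Set.indicator {q : Finset (Fin (M n v)) × (Fin (M n v) → Fin (W n v u)) |
            ValidB n v u A q.1 q.2}
          (fun q => (Nat.card {p : Fin (W n v u) × (Fin v → Bool) |
              p ∈ Plausible n v u F (F A RA) i ∧
                ¬ Feasible n v u F (F A RA) i q.1 q.2 p} : ℝ)) q)
        = ∑ q ∈ V, (Nat.card {p : Fin (W n v u) × (Fin v → Bool) |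
              p ∈ Plausible n v u F (F A RA) i ∧
                ¬ Feasible n v u F (F A RA) i q.1 q.2 p} : ℝ) := by
      rw [Finset.sum_congr rfl fun q _ => Set.indicator_apply _ _ q]
      simp only [Set.mem_setOf_eq]
      exact (Finset.sum_filter _ _).symm
    rw [hsum1, hcard1]
    rcases Nat.eq_zero_or_pos V.card with hV0 | hV0
    · rw [Finset.card_eq_zero] at hV0
      rw [hV0]
      simp only [Finset.sum_empty, Finset.card_empty, Nat.cast_zero, div_zero]
      positivity
    · rw [div_le_iff₀ (by exact_mod_cast hV0)]
      have hfin : (∑ q ∈ V, Nat.card {p : Fin (W n v u) × (Fin v → Bool) |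
          p ∈ Plausible n v u F (F A RA) i ∧
            ¬ Feasible n v u F (F A RA) i q.1 q.2 p})
          ≤ (M n v + 1) * V.card := by
        have hb1 : (∑ q ∈ V, Nat.card {p : Fin (W n v u) × (Fin v → Bool) |
            p ∈ Plausible n v u F (F A RA) i ∧
              ¬ Feasible n v u F (F A RA) i q.1 q.2 p})
            ≤ ∑ q ∈ V, ∑ j ∈ q.1 ∩ Finset.univ,
                (PF.filter (fun p => q.2 j = (wt p).1 j)).card := by
          refine Finset.sum_le_sum fun q hq => ?_
          rw [Finset.inter_univ]
          exact hNle q.1 q.2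
        have hb2 := sum_bound A V Finset.univ (n / v) PF (fun p => (wt p).1)
          (fun q hq j hj => ((Finset.mem_filter.1 hq).2).2.1 j hj)
          (fun q hq j _ hj' y hy => Finset.mem_filter.2
            ⟨Finset.mem_univ _, hclosedV q.1 q.2 (Finset.mem_filter.1 hq).2 j hj' y hy⟩)
          (fun q hq => by
            rw [Finset.inter_univ, ((Finset.mem_filter.1 hq).2).1])
        have hmul : (W n v u - 1) * (∑ q ∈ V, Nat.card
            {p : Fin (W n v u) × (Fin v → Bool) |
              p ∈ Plausible n v u F (F A RA) i ∧
                ¬ Feasible n v u F (F A RA) i q.1 q.2 p})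
            ≤ (W n v u - 1) * ((M n v + 1) * V.card) := by
          calc (W n v u - 1) * (∑ q ∈ V, Nat.card
              {p : Fin (W n v u) × (Fin v → Bool) |
                p ∈ Plausible n v u F (F A RA) i ∧
                  ¬ Feasible n v u F (F A RA) i q.1 q.2 p})
              ≤ (W n v u - 1) * ∑ q ∈ V, ∑ j ∈ q.1 ∩ Finset.univ,
                  (PF.filter (fun p => q.2 j = (wt p).1 j)).card :=
                Nat.mul_le_mul_left _ hb1
            _ ≤ PF.card * (n / v * V.card) := hb2
            _ ≤ W n v u * (n / v * V.card) := Nat.mul_le_mul_right _ hPFcard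
            _ = (W n v u * (n / v)) * V.card := by ring
            _ ≤ ((M n v + 1) * (W n v u - 1)) * V.card := Nat.mul_le_mul_right _ ineqA
            _ = (W n v u - 1) * ((M n v + 1) * V.card) := by ring
        exact Nat.le_of_mul_le_mul_left hmul (by omega)
      calc (∑ q ∈ V, (Nat.card {p : Fin (W n v u) × (Fin v → Bool) |
            p ∈ Plausible n v u F (F A RA) i ∧
              ¬ Feasible n v u F (F A RA) i q.1 q.2 p} : ℝ))
          = ((∑ q ∈ V, Nat.card {p : Fin (W n v u) × (Fin v → Bool) |
            p ∈ Plausible n v u F (F A RA) i ∧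
              ¬ Feasible n v u F (F A RA) i q.1 q.2 p} : ℕ) : ℝ) := by
            rw [Nat.cast_sum]
        _ ≤ (((M n v + 1) * V.card : ℕ) : ℝ) := by exact_mod_cast hfin
        _ = ((M n v : ℝ) + 1) * (V.card : ℝ) := by push_cast; ring
  · -- part 2: conditioned on i ∈ P_B and b_i = β
    intro β hβ
    set V2 : Finset (Finset (Fin (M n v)) × (Fin (M n v) → Fin (W n v u))) :=
      Finset.univ.filter (fun q => ValidB n v u A q.1 q.2 ∧ i ∈ q.1 ∧ q.2 i = β) with hV2def
    have hcard2 : Nat.card {q : Finset (Fin (M n v)) × (Fin (M n v) → Fin (W n v u)) //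
        ValidB n v u A q.1 q.2 ∧ i ∈ q.1 ∧ q.2 i = β} = V2.card := by
      rw [Nat.card_eq_fintype_card, Fintype.card_subtype]
    have hsum2 : (∑ q : Finset (Fin (M n v)) × (Fin (M n v) → Fin (W n v u)),
        Set.indicator {q : Finset (Fin (M n v)) × (Fin (M n v) → Fin (W n v u)) |
            ValidB n v u A q.1 q.2 ∧ i ∈ q.1 ∧ q.2 i = β}
          (fun q => (Nat.card {p : Fin (W n v u) × (Fin v → Bool) |
              p ∈ Plausible n v u F (F A RA) i ∧
                ¬ Feasible n v u F (F A RA) i q.1 q.2 p} : ℝ)) q)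
        = ∑ q ∈ V2, (Nat.card {p : Fin (W n v u) × (Fin v → Bool) |
              p ∈ Plausible n v u F (F A RA) i ∧
                ¬ Feasible n v u F (F A RA) i q.1 q.2 p} : ℝ) := by
      rw [Finset.sum_congr rfl fun q _ => Set.indicator_apply _ _ q]
      simp only [Set.mem_setOf_eq]
      exact (Finset.sum_filter _ _).symm
    rw [hsum2, hcard2]
    rcases Nat.eq_zero_or_pos V2.card with hV0 | hV0
    · rw [Finset.card_eq_zero] at hV0
      rw [hV0]
      simp only [Finset.sum_empty, Finset.card_empty, Nat.cast_zero, div_zero]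
      positivity
    · rw [div_le_iff₀ (by exact_mod_cast hV0)]
      have hfin : (∑ q ∈ V2, Nat.card {p : Fin (W n v u) × (Fin v → Bool) |
          p ∈ Plausible n v u F (F A RA) i ∧
            ¬ Feasible n v u F (F A RA) i q.1 q.2 p})
          ≤ (M n v + 1) * V2.card := by
        have hb1 : ∀ q ∈ V2, Nat.card {p : Fin (W n v u) × (Fin v → Bool) |
            p ∈ Plausible n v u F (F A RA) i ∧
              ¬ Feasible n v u F (F A RA) i q.1 q.2 p}
            ≤ (∑ j ∈ q.1 ∩ Finset.univ.erase i,
                (PF.filter (fun p => q.2 j = (wt p).1 j)).card) + 1 := by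
          intro q hq
          obtain ⟨hqv, hqi, hqβ⟩ := (Finset.mem_filter.1 hq).2
          have e1 : q.1 ∩ Finset.univ.erase i = q.1.erase i := by
            rw [Finset.inter_erase, Finset.inter_univ]
          have hHi : (PF.filter (fun p => q.2 i = (wt p).1 i)).card ≤ 1 := by
            rw [Finset.card_le_one]
            intro a ha b hb
            obtain ⟨haPF, haeq⟩ := Finset.mem_filter.1 ha
            obtain ⟨hbPF, hbeq⟩ := Finset.mem_filter.1 hb
            have haPl : a ∈ Plausible n v u F (F A RA) i := (Finset.mem_filter.1 haPF).2
            have hbPl : b ∈ Plausible n v u F (F A RA) i := (Finset.mem_filter.1 hbPF).2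
            have ha1 : a.1 = β := by
              rw [← (hwt a haPl).2.2.1, ← haeq]
              exact hqβ
            have hb1' : b.1 = β := by
              rw [← (hwt b hbPl).2.2.1, ← hbeq]
              exact hqβ
            have h2 : a.2 = b.2 := by
              rw [hval a haPl, hval b hbPl, ha1, hb1']
            exact Prod.ext (ha1.trans hb1'.symm) h2
          calc Nat.card {p : Fin (W n v u) × (Fin v → Bool) |
              p ∈ Plausible n v u F (F A RA) i ∧
                ¬ Feasible n v u F (F A RA) i q.1 q.2 p}
              ≤ ∑ j ∈ q.1, (PF.filter (fun p => q.2 j = (wt p).1 j)).card :=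
                hNle q.1 q.2
            _ = (∑ j ∈ q.1.erase i, (PF.filter (fun p => q.2 j = (wt p).1 j)).card)
                  + (PF.filter (fun p => q.2 i = (wt p).1 i)).card :=
                (Finset.sum_erase_add _ _ hqi).symm
            _ ≤ (∑ j ∈ q.1 ∩ Finset.univ.erase i,
                  (PF.filter (fun p => q.2 j = (wt p).1 j)).card) + 1 := by
                rw [e1]
                exact Nat.add_le_add_left hHi _
        have hb2 := sum_bound A V2 (Finset.univ.erase i) (n / v - 1) PF (fun p => (wt p).1)
          (fun q hq j hj => ((Finset.mem_filter.1 hq).2).1.2.1 j hj)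
          (fun q hq j hjJ hj' y hy => by
            obtain ⟨hqv, hqi, hqβ⟩ := (Finset.mem_filter.1 hq).2
            refine Finset.mem_filter.2 ⟨Finset.mem_univ _,
              hclosedV q.1 q.2 hqv j hj' y hy, hqi, ?_⟩
            show Function.update q.2 j y i = β
            rw [Function.update_of_ne (Finset.ne_of_mem_erase hjJ).symm]
            exact hqβ)
          (fun q hq => by
            obtain ⟨hqv, hqi, hqβ⟩ := (Finset.mem_filter.1 hq).2
            rw [Finset.inter_erase, Finset.inter_univ,
              Finset.card_erase_of_mem hqi, hqv.1])
        have hsumle : (∑ q ∈ V2, Nat.card {p : Fin (W n v u) × (Fin v → Bool) |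
            p ∈ Plausible n v u F (F A RA) i ∧
              ¬ Feasible n v u F (F A RA) i q.1 q.2 p})
            ≤ (∑ q ∈ V2, ∑ j ∈ q.1 ∩ Finset.univ.erase i,
                (PF.filter (fun p => q.2 j = (wt p).1 j)).card) + V2.card := by
          calc (∑ q ∈ V2, Nat.card {p : Fin (W n v u) × (Fin v → Bool) |
              p ∈ Plausible n v u F (F A RA) i ∧
                ¬ Feasible n v u F (F A RA) i q.1 q.2 p})
              ≤ ∑ q ∈ V2, ((∑ j ∈ q.1 ∩ Finset.univ.erase i,
                  (PF.filter (fun p => q.2 j = (wt p).1 j)).card) + 1) :=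
                Finset.sum_le_sum hb1
            _ = (∑ q ∈ V2, ∑ j ∈ q.1 ∩ Finset.univ.erase i,
                  (PF.filter (fun p => q.2 j = (wt p).1 j)).card) + ∑ _q ∈ V2, 1 :=
                Finset.sum_add_distrib
            _ = (∑ q ∈ V2, ∑ j ∈ q.1 ∩ Finset.univ.erase i,
                  (PF.filter (fun p => q.2 j = (wt p).1 j)).card) + V2.card := by
                rw [Finset.sum_const, smul_eq_mul, mul_one]
        have hX : (∑ q ∈ V2, ∑ j ∈ q.1 ∩ Finset.univ.erase i,
            (PF.filter (fun p => q.2 j = (wt p).1 j)).card) ≤ M n v * V2.card := by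
          have hmul : (W n v u - 1) * (∑ q ∈ V2, ∑ j ∈ q.1 ∩ Finset.univ.erase i,
              (PF.filter (fun p => q.2 j = (wt p).1 j)).card)
              ≤ (W n v u - 1) * (M n v * V2.card) := by
            calc (W n v u - 1) * (∑ q ∈ V2, ∑ j ∈ q.1 ∩ Finset.univ.erase i,
                (PF.filter (fun p => q.2 j = (wt p).1 j)).card)
                ≤ PF.card * ((n / v - 1) * V2.card) := hb2
              _ ≤ W n v u * ((n / v - 1) * V2.card) := Nat.mul_le_mul_right _ hPFcard
              _ = (W n v u * (n / v - 1)) * V2.card := by ring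
              _ ≤ (M n v * (W n v u - 1)) * V2.card := Nat.mul_le_mul_right _ ineqB
              _ = (W n v u - 1) * (M n v * V2.card) := by ring
          exact Nat.le_of_mul_le_mul_left hmul (by omega)
        calc (∑ q ∈ V2, Nat.card {p : Fin (W n v u) × (Fin v → Bool) |
            p ∈ Plausible n v u F (F A RA) i ∧
              ¬ Feasible n v u F (F A RA) i q.1 q.2 p})
            ≤ (∑ q ∈ V2, ∑ j ∈ q.1 ∩ Finset.univ.erase i,
                (PF.filter (fun p => q.2 j = (wt p).1 j)).card) + V2.card := hsumle
          _ ≤ M n v * V2.card + V2.card := Nat.add_le_add_right hX _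
          _ = (M n v + 1) * V2.card := by ring
      calc (∑ q ∈ V2, (Nat.card {p : Fin (W n v u) × (Fin v → Bool) |
            p ∈ Plausible n v u F (F A RA) i ∧
              ¬ Feasible n v u F (F A RA) i q.1 q.2 p} : ℝ))
          = ((∑ q ∈ V2, Nat.card {p : Fin (W n v u) × (Fin v → Bool) |
            p ∈ Plausible n v u F (F A RA) i ∧
              ¬ Feasible n v u F (F A RA) i q.1 q.2 p} : ℕ) : ℝ) := by
            rw [Nat.cast_sum]
        _ ≤ (((M n v + 1) * V2.card : ℕ) : ℝ) := by exact_mod_cast hfin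
        _ = ((M n v : ℝ) + 1) * (V2.card : ℝ) := by push_cast; ring

end Retrieval
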